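/- There exist a symmetric positive definite matrix P ∈ ℝ^{2×2} and a constant c₂ < 0 such that for all x = (x₁, x₂) ∈ ℝ²: 2(Px)₁·x₂ + 2(Px)₂·(−2x₁ − x₂) + P₂₂·x₁² ≤ c₂·xᵀPx. -/

import Mathlib

open scoped Matrix

/-- For Example 1 of the paper there exists a symmetric positive definite matrix
`P` and `c₂ < 0` such that the generator of `V(x) = xᵀPx` satisfies
`𝓛V(x) = 2(Px)₁x₂ + 2(Px)₂(−2x₁−x₂) + P₂₂x₁² ≤ c₂ · xᵀPx` for all `x ∈ ℝ²`. -/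
theorem stmt_8 :
    ∃ (P : Matrix (Fin 2) (Fin 2) ℝ) (c₂ : ℝ), P.IsSymm ∧ P.PosDef ∧ c₂ < 0 ∧
      ∀ x₁ x₂ : ℝ,
        2 * (P.mulVec ![x₁, x₂] 0) * x₂
            + 2 * (P.mulVec ![x₁, x₂] 1) * (-2 * x₁ - x₂)
            + P 1 1 * x₁ ^ 2
          ≤ c₂ * (![x₁, x₂] ⬝ᵥ P.mulVec ![x₁, x₂]) := by
  refine ⟨!![5/2, 1/2; 1/2, 1], -2/7, ?_, ?_, by norm_num, ?_⟩
  · ext i j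
    fin_cases i <;> fin_cases j <;> simp [Matrix.transpose]
  · refine Matrix.posDef_iff_dotProduct_mulVec.mpr ⟨?_, ?_⟩
    · ext i j
      fin_cases i <;> fin_cases j <;> simp [Matrix.conjTranspose_apply]
    · intro x hx
      have h1 : x 0 ≠ 0 ∨ x 1 ≠ 0 := by
        by_contra h
        push_neg at h
        apply hx
        ext i
        fin_cases i <;> simp [h.1, h.2]
      have : star x ⬝ᵥ (!![5/2, 1/2; 1/2, 1] : Matrix (Fin 2) (Fin 2) ℝ) *ᵥ x
          = 5/2 * (x 0)^2 + (x 0) * (x 1) + (x 1)^2 := by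
        simp [dotProduct, Matrix.mulVec, Fin.sum_univ_two, Matrix.vecHead, Matrix.vecTail]
        ring
      rw [this]
      rcases h1 with h | h
      · nlinarith [sq_nonneg (x 0 + x 1), sq_nonneg (x 0), mul_self_pos.mpr h]
      · nlinarith [sq_nonneg (x 0 + x 1), sq_nonneg (x 0), mul_self_pos.mpr h]
  · intro x₁ x₂
    simp [Matrix.mulVec, dotProduct, Fin.sum_univ_two, Matrix.vecHead, Matrix.vecTail]
    nlinarith [sq_nonneg (x₁ - x₂), sq_nonneg x₁, sq_nonneg x₂]
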